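/- Let U be a unitary on H satisfying the SSQW conditions and Assumption A. Then there exist families {η₁ˣ, η₂ˣ}_{x∈ℤ}, {ζ₁ˣ, ζ₂ˣ}_{x∈ℤ} where each {η₁ˣ, η₂ˣ} and each {ζ₁ˣ, ζ₂ˣ} is an orthonormal basis of H_x, and an orthonormal basis {ξ₁ˣ, ξ₂ˣ}_{x∈ℤ} of H, such that ξ₁ˣ ∈ ℂη₁ˣ + ℂη₂^{x+1}, ξ₂ˣ ∈ ℂη₁^{x−1} + ℂη₂ˣ, and U = Σ_{x∈ℤ} |ξ₁ˣ⟩⟨ζ₁ˣ| + |ξ₂ˣ⟩⟨ζ₂ˣ| (equivalently, U ζ₁ˣ = ξ₁ˣ and U ζ₂ˣ = ξ₂ˣ for all x ∈ ℤ). -/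

import Mathlib

noncomputable section

/-- `H = ⊕_{x∈ℤ} H_x`, the ℓ² direct sum with each `H_x` a copy of `ℂ²`. -/
abbrev H : Type := lp (fun _ : ℤ × Fin 2 => ℂ) 2

/-- The canonical orthonormal basis vector `eᵢˣ` of `H_x` viewed in `H`. -/
def e (x : ℤ) (i : Fin 2) : H := lp.single 2 (x, i) 1

/-- The subspace `H_x` of `H`. -/
def Hx (x : ℤ) : Submodule ℂ H := Submodule.span ℂ {e x 0, e x 1}

/-- The rank-one operator `|u⟩⟨v| : w ↦ ⟨v, w⟩ u`. -/
def ketbra (u v : H) : H →L[ℂ] H := ((innerSL ℂ) v).smulRight u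

/-- The orthogonal projection of `H` onto `H_x`. -/
def P (x : ℤ) : H →L[ℂ] H := ketbra (e x 0) (e x 0) + ketbra (e x 1) (e x 1)

/-- A unitary (linear isometric equivalence) viewed as a continuous linear map. -/
def clm (U : H ≃ₗᵢ[ℂ] H) : H →L[ℂ] H := U.toLinearIsometry.toContinuousLinearMap

/-- `{u, v}` is an orthonormal basis of the two dimensional space `H_x`. -/
def ONBx (x : ℤ) (u v : H) : Prop :=
  u ∈ Hx x ∧ v ∈ Hx x ∧ ‖u‖ = 1 ∧ ‖v‖ = 1 ∧ (inner ℂ u v : ℂ) = 0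

/-- The SSQW conditions: `U H_x ⊆ H_{x-1} ⊕ H_x ⊕ H_{x+1}` and
`rank(P_{x±1} U P_x) ≤ 1` for all `x`. -/
def SSQW (U : H ≃ₗᵢ[ℂ] H) : Prop :=
  (∀ x : ℤ, ∀ ψ ∈ Hx x, U ψ ∈ Hx (x - 1) ⊔ Hx x ⊔ Hx (x + 1)) ∧
  (∀ x : ℤ, LinearMap.rank (((P (x + 1)).comp ((clm U).comp (P x))).toLinearMap) ≤ 1) ∧
  (∀ x : ℤ, LinearMap.rank (((P (x - 1)).comp ((clm U).comp (P x))).toLinearMap) ≤ 1)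

/-- Assumption A: `U P_y` is never of the form `|v⟩⟨ζ₁| + |w⟩⟨ζ₂|` with
`{ζ₁, ζ₂}` an orthonormal basis of `H_y` and unit vectors `v, w` with either
`v ∈ H_{y-1}, w ∈ H_y` or `v ∈ H_y, w ∈ H_{y+1}`. -/
def AssumptionA (U : H ≃ₗᵢ[ℂ] H) : Prop :=
  ¬ ∃ (y : ℤ) (ζ₁ ζ₂ v w : H), ONBx y ζ₁ ζ₂ ∧ ‖v‖ = 1 ∧ ‖w‖ = 1 ∧
    ((v ∈ Hx (y - 1) ∧ w ∈ Hx y) ∨ (v ∈ Hx y ∧ w ∈ Hx (y + 1))) ∧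
    (clm U).comp (P y) = ketbra v ζ₁ + ketbra w ζ₂

local notation "⟪" a ", " b "⟫" => @inner ℂ H _ a b

lemma e_apply (x : ℤ) (i : Fin 2) (z : ℤ × Fin 2) :
    (e x i : H) z = if z = (x, i) then 1 else 0 := by
  rw [e, lp.single_apply]
  split_ifs with h
  · subst h; simp
  · simp [h]

lemma inner_e (x : ℤ) (i : Fin 2) (w : H) : ⟪e x i, w⟫ = w (x, i) := by
  rw [e, lp.inner_single_left]
  simp [RCLike.inner_apply]

lemma H_ext {u w : H} (h : ∀ z, u z = w z) : u = w := by
  apply Subtype.ext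
  funext z
  exact h z

lemma H_ext0 {w : H} (h : ∀ z, w z = 0) : w = 0 := by
  apply H_ext
  intro z; rw [h]; rfl

lemma coe_add (u w : H) (z : ℤ × Fin 2) : (u + w) z = u z + w z := rfl
lemma coe_smul (c : ℂ) (w : H) (z : ℤ × Fin 2) : (c • w) z = c * w z := rfl
lemma coe_zero (z : ℤ × Fin 2) : (0 : H) z = 0 := rfl

lemma mem_Hx {w : H} {x : ℤ} : w ∈ Hx x ↔ ∃ a b : ℂ, w = a • e x 0 + b • e x 1 := by
  rw [Hx, Submodule.mem_span_pair]
  constructor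
  · rintro ⟨a, b, h⟩; exact ⟨a, b, h.symm⟩
  · rintro ⟨a, b, h⟩; exact ⟨a, b, h.symm⟩

lemma coord_of_mem {w : H} {x : ℤ} (hw : w ∈ Hx x) {z : ℤ × Fin 2} (hz : z.1 ≠ x) :
    w z = 0 := by
  obtain ⟨a, b, rfl⟩ := mem_Hx.mp hw
  rw [coe_add, coe_smul, coe_smul, e_apply, e_apply]
  rw [if_neg (by rintro rfl; exact hz rfl), if_neg (by rintro rfl; exact hz rfl)]
  ring

lemma repr_of_mem {w : H} {x : ℤ} (hw : w ∈ Hx x) :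
    w = w (x, 0) • e x 0 + w (x, 1) • e x 1 := by
  obtain ⟨a, b, rfl⟩ := mem_Hx.mp hw
  have h0 : ((a • e x 0 + b • e x 1 : H)) (x, 0) = a := by
    rw [coe_add, coe_smul, coe_smul, e_apply, e_apply]; norm_num
  have h1 : ((a • e x 0 + b • e x 1 : H)) (x, 1) = b := by
    rw [coe_add, coe_smul, coe_smul, e_apply, e_apply]; norm_num
  rw [h0, h1]

lemma inner_of_left_mem {u : H} {x : ℤ} (hu : u ∈ Hx x) (w : H) :
    ⟪u, w⟫ = starRingEnd ℂ (u (x, 0)) * w (x, 0) + starRingEnd ℂ (u (x, 1)) * w (x, 1) := by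
  conv_lhs => rw [repr_of_mem hu]
  rw [inner_add_left, inner_smul_left, inner_smul_left, inner_e, inner_e]

lemma inner_cross {u w : H} {x y : ℤ} (hu : u ∈ Hx x) (hw : w ∈ Hx y) (hxy : x ≠ y) :
    ⟪u, w⟫ = 0 := by
  rw [inner_of_left_mem hu, coord_of_mem hw (by simpa using hxy),
    coord_of_mem hw (by simpa using hxy)]
  ring

lemma P_apply (x : ℤ) (w : H) : P x w = w (x, 0) • e x 0 + w (x, 1) • e x 1 := by
  show ketbra (e x 0) (e x 0) w + ketbra (e x 1) (e x 1) w = _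
  rw [ketbra, ketbra]
  show ⟪e x 0, w⟫ • e x 0 + ⟪e x 1, w⟫ • e x 1 = _
  rw [inner_e, inner_e]

lemma P_mem (x : ℤ) (w : H) : P x w ∈ Hx x := by
  rw [P_apply]
  exact Submodule.add_mem _ (Submodule.smul_mem _ _ (Submodule.subset_span (by simp)))
    (Submodule.smul_mem _ _ (Submodule.subset_span (by simp)))

lemma P_coord (x : ℤ) (w : H) (z : ℤ × Fin 2) :
    (P x w) z = if z.1 = x then w z else 0 := by
  rw [P_apply, coe_add, coe_smul, coe_smul, e_apply, e_apply]
  obtain ⟨z1, z2⟩ := z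
  by_cases h : z1 = x
  · subst h
    fin_cases z2 <;> simp
  · simp [h, Prod.ext_iff]

lemma P_of_mem {w : H} {x : ℤ} (hw : w ∈ Hx x) : P x w = w := by
  apply H_ext; intro z
  rw [P_coord]
  split_ifs with h
  · rfl
  · exact (coord_of_mem hw h).symm

lemma P_of_mem_ne {w : H} {x y : ℤ} (hw : w ∈ Hx y) (hxy : y ≠ x) : P x w = 0 := by
  apply H_ext0; intro z
  rw [P_coord]
  split_ifs with h
  · exact coord_of_mem hw (h ▸ hxy.symm)
  · rfl

lemma eq_of_coords {u w : H} {x : ℤ} (hu : u ∈ Hx x) (hw : w ∈ Hx x)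
    (h0 : u (x, 0) = w (x, 0)) (h1 : u (x, 1) = w (x, 1)) : u = w := by
  rw [repr_of_mem hu, repr_of_mem hw, h0, h1]

lemma norm_one_iff {w : H} : ‖w‖ = 1 ↔ ⟪w, w⟫ = 1 := by
  rw [inner_self_eq_norm_sq_to_K]
  constructor
  · intro h; rw [h]; norm_num
  · intro h
    have h2 : (‖w‖ : ℂ) ^ 2 = (1 : ℂ) := h
    have : (‖w‖ : ℝ) ^ 2 = 1 := by exact_mod_cast h2
    nlinarith [norm_nonneg w]

lemma e_mem (x : ℤ) (i : Fin 2) : e x i ∈ Hx x := by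
  apply Submodule.subset_span
  fin_cases i <;> simp

lemma inner_e_e (x y : ℤ) (i j : Fin 2) :
    ⟪e x i, e y j⟫ = if (y, j) = (x, i) then 1 else 0 := by
  rw [inner_e, e_apply]
  simp [eq_comm]

lemma norm_e (x : ℤ) (i : Fin 2) : ‖e x i‖ = 1 := by
  rw [norm_one_iff, inner_e_e, if_pos rfl]

lemma mem_sup2 {a b : ℤ} {v : H} (hab : a ≠ b) (h : v ∈ Hx a ⊔ Hx b) :
    v = P a v + P b v := by
  obtain ⟨p, hp, q, hq, rfl⟩ := Submodule.mem_sup.mp h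
  rw [map_add, map_add, P_of_mem hp, P_of_mem_ne hq hab.symm, P_of_mem_ne hp hab,
    P_of_mem hq]
  abel

lemma mem_sup2_of {a b : ℤ} {v : H} (h : v = P a v + P b v) : v ∈ Hx a ⊔ Hx b := by
  rw [h]
  exact Submodule.mem_sup.mpr ⟨P a v, P_mem a v, P b v, P_mem b v, rfl⟩

lemma coord_sup3 {a b c : ℤ} {v : H} (h : v ∈ Hx a ⊔ Hx b ⊔ Hx c) {z : ℤ × Fin 2}
    (ha : z.1 ≠ a) (hb : z.1 ≠ b) (hc : z.1 ≠ c) : v z = 0 := by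
  obtain ⟨pq, hpq, r, hr, rfl⟩ := Submodule.mem_sup.mp h
  obtain ⟨p, hp, q, hq, rfl⟩ := Submodule.mem_sup.mp hpq
  rw [coe_add, coe_add, coord_of_mem hp ha, coord_of_mem hq hb, coord_of_mem hr hc]
  ring

lemma sup3_decomp {a b c : ℤ} {v : H} (hab : a ≠ b) (hac : a ≠ c) (hbc : b ≠ c)
    (h : v ∈ Hx a ⊔ Hx b ⊔ Hx c) : v = P a v + P b v + P c v := by
  apply H_ext; intro z
  rw [coe_add, coe_add, P_coord, P_coord, P_coord]
  by_cases hza : z.1 = a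
  · rw [if_pos hza, if_neg (by omega), if_neg (by omega)]; ring
  by_cases hzb : z.1 = b
  · rw [if_neg hza, if_pos hzb, if_neg (by omega)]; ring
  by_cases hzc : z.1 = c
  · rw [if_neg hza, if_neg hzb, if_pos hzc]; ring
  · rw [if_neg hza, if_neg hzb, if_neg hzc, coord_sup3 h hza hzb hzc]; ring

lemma dep_of_rank_le_one {T : H →L[ℂ] H} (hT : LinearMap.rank T.toLinearMap ≤ 1)
    (v w : H) : ∃ c d : ℂ, (c ≠ 0 ∨ d ≠ 0) ∧ c • T v + d • T w = 0 := by
  by_contra hcon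
  push_neg at hcon
  have hind : LinearIndependent ℂ ![T v, T w] := by
    rw [LinearIndependent.pair_iff]
    intro s t hst
    by_contra hne
    rw [not_and_or] at hne
    rcases hne with hs | ht
    · exact hcon s t (Or.inl hs) hst
    · exact hcon s t (Or.inr ht) hst
  have hmemv : T v ∈ LinearMap.range T.toLinearMap := ⟨v, rfl⟩
  have hmemw : T w ∈ LinearMap.range T.toLinearMap := ⟨w, rfl⟩
  have hind2 : LinearIndependent ℂ
      (fun i : Fin 2 => (![(⟨T v, hmemv⟩ : LinearMap.range T.toLinearMap), ⟨T w, hmemw⟩] : Fin 2 → LinearMap.range T.toLinearMap) i)  := by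
    apply LinearIndependent.of_comp (LinearMap.range T.toLinearMap).subtype
    convert hind using 1
    funext i
    fin_cases i <;> rfl
  have hcard := hind2.cardinal_le_rank
  rw [Cardinal.mk_fin] at hcard
  have : (2 : Cardinal) ≤ 1 := le_trans (by exact_mod_cast hcard) hT
  norm_num at this

def perp (x : ℤ) (w : H) : H :=
  (-(starRingEnd ℂ (w (x, 1)))) • e x 0 + (starRingEnd ℂ (w (x, 0))) • e x 1

lemma perp_mem (x : ℤ) (w : H) : perp x w ∈ Hx x :=
  Submodule.add_mem _ (Submodule.smul_mem _ _ (e_mem x 0)) (Submodule.smul_mem _ _ (e_mem x 1))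

lemma perp_coord0 (x : ℤ) (w : H) : (perp x w) (x, 0) = -(starRingEnd ℂ (w (x, 1))) := by
  rw [perp, coe_add, coe_smul, coe_smul, e_apply, e_apply]; norm_num

lemma perp_coord1 (x : ℤ) (w : H) : (perp x w) (x, 1) = starRingEnd ℂ (w (x, 0)) := by
  rw [perp, coe_add, coe_smul, coe_smul, e_apply, e_apply]; norm_num

lemma inner_perp {x : ℤ} {w : H} (hw : w ∈ Hx x) : ⟪w, perp x w⟫ = 0 := by
  rw [inner_of_left_mem hw, perp_coord0, perp_coord1]; ring

lemma coords_ne_zero {x : ℤ} {w : H} (hw : w ∈ Hx x) (h : w ≠ 0) :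
    ¬(w (x, 0) = 0 ∧ w (x, 1) = 0) := by
  rintro ⟨h0, h1⟩
  apply h
  rw [repr_of_mem hw, h0, h1]
  simp

lemma inner_perp_self {x : ℤ} (w : H) : ⟪perp x w, perp x w⟫ =
    starRingEnd ℂ (w (x, 0)) * w (x, 0) + starRingEnd ℂ (w (x, 1)) * w (x, 1) := by
  rw [inner_of_left_mem (perp_mem x w), perp_coord0, perp_coord1]
  simp only [map_neg, Complex.conj_conj]
  ring

lemma mem_span_perp {x : ℤ} {w z : H} (hw : w ∈ Hx x) (hwne : w ≠ 0) (hz : z ∈ Hx x)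
    (horth : ⟪w, z⟫ = 0) : z ∈ Submodule.span ℂ {perp x w} := by
  rw [Submodule.mem_span_singleton]
  rw [inner_of_left_mem hw] at horth
  by_cases ha : w (x, 0) = 0
  · have hb : w (x, 1) ≠ 0 := fun hb => coords_ne_zero hw hwne ⟨ha, hb⟩
    have hcb : starRingEnd ℂ (w (x, 1)) ≠ 0 := by simpa using hb
    rw [ha, map_zero, zero_mul, zero_add] at horth
    have hz1 : z (x, 1) = 0 := (mul_eq_zero.mp horth).resolve_left hcb
    refine ⟨-(z (x, 0)) / starRingEnd ℂ (w (x, 1)), ?_⟩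
    apply eq_of_coords (Submodule.smul_mem _ _ (perp_mem x w)) hz
    · rw [coe_smul, perp_coord0]; field_simp
    · rw [coe_smul, perp_coord1, hz1, ha]; simp
  · have hca : starRingEnd ℂ (w (x, 0)) ≠ 0 := by simpa using ha
    refine ⟨z (x, 1) / starRingEnd ℂ (w (x, 0)), ?_⟩
    apply eq_of_coords (Submodule.smul_mem _ _ (perp_mem x w)) hz
    · rw [coe_smul, perp_coord0]
      field_simp
      linear_combination -horth
    · rw [coe_smul, perp_coord1]
      field_simp

lemma rows_of_cols {a b c d : ℂ}
    (h1 : starRingEnd ℂ a * a + starRingEnd ℂ b * b = 1)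
    (h2 : starRingEnd ℂ c * c + starRingEnd ℂ d * d = 1)
    (h3 : starRingEnd ℂ a * c + starRingEnd ℂ b * d = 0) :
    a * starRingEnd ℂ a + c * starRingEnd ℂ c = 1 ∧
    a * starRingEnd ℂ b + c * starRingEnd ℂ d = 0 ∧
    b * starRingEnd ℂ a + d * starRingEnd ℂ c = 0 ∧
    b * starRingEnd ℂ b + d * starRingEnd ℂ d = 1 := by
  set M : Matrix (Fin 2) (Fin 2) ℂ := !![a, c; b, d] with hM
  have h3' : a * starRingEnd ℂ c + b * starRingEnd ℂ d = 0 := by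
    have := congrArg (starRingEnd ℂ) h3
    simpa [map_add, map_mul] using this
  have hcol : M.conjTranspose * M = 1 := by
    ext i j
    fin_cases i <;> fin_cases j <;>
      simp [hM, Matrix.mul_apply, Fin.sum_univ_two, Matrix.conjTranspose_apply,
        Matrix.one_apply] <;>
      first
      | linear_combination h1
      | linear_combination h2
      | linear_combination h3
      | linear_combination h3'
  have hrow : M * M.conjTranspose = 1 := mul_eq_one_comm.mp hcol
  have E : ∀ i j : Fin 2, (M * M.conjTranspose) i j = (1 : Matrix (Fin 2) (Fin 2) ℂ) i j := by
    intro i j; rw [hrow]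
  have E00 := E 0 0
  have E01 := E 0 1
  have E10 := E 1 0
  have E11 := E 1 1
  simp [hM, Matrix.mul_apply, Fin.sum_univ_two, Matrix.conjTranspose_apply,
    Matrix.one_apply] at E00 E01 E10 E11
  exact ⟨E00, E01, E10, E11⟩

lemma onb_conds {x : ℤ} {ζ₁ ζ₂ : H} (h : ONBx x ζ₁ ζ₂) :
    starRingEnd ℂ (ζ₁ (x, 0)) * ζ₁ (x, 0) + starRingEnd ℂ (ζ₁ (x, 1)) * ζ₁ (x, 1) = 1 ∧
    starRingEnd ℂ (ζ₂ (x, 0)) * ζ₂ (x, 0) + starRingEnd ℂ (ζ₂ (x, 1)) * ζ₂ (x, 1) = 1 ∧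
    starRingEnd ℂ (ζ₁ (x, 0)) * ζ₂ (x, 0) + starRingEnd ℂ (ζ₁ (x, 1)) * ζ₂ (x, 1) = 0 := by
  obtain ⟨hm1, hm2, hn1, hn2, hi⟩ := h
  refine ⟨?_, ?_, ?_⟩
  · rw [← inner_of_left_mem hm1]; exact norm_one_iff.mp hn1
  · rw [← inner_of_left_mem hm2]; exact norm_one_iff.mp hn2
  · rw [← inner_of_left_mem hm1]; exact hi

lemma P_eq_ONB {x : ℤ} {ζ₁ ζ₂ : H} (h : ONBx x ζ₁ ζ₂) (w : H) :
    P x w = ⟪ζ₁, w⟫ • ζ₁ + ⟪ζ₂, w⟫ • ζ₂ := by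
  obtain ⟨R1, R2, R3, R4⟩ := rows_of_cols (onb_conds h).1 (onb_conds h).2.1 (onb_conds h).2.2
  obtain ⟨hm1, hm2, _, _, _⟩ := h
  apply H_ext; intro z
  rw [P_coord, coe_add, coe_smul, coe_smul, inner_of_left_mem hm1, inner_of_left_mem hm2]
  by_cases hz : z.1 = x
  · obtain ⟨z1, z2⟩ := z
    simp only at hz
    subst hz
    fin_cases z2
    · simp only [eq_self_iff_true, if_true, Fin.zero_eta, Fin.isValue]
      linear_combination -((w (z1, 0)) * R1 + (w (z1, 1)) * R2)
    · simp only [eq_self_iff_true, if_true, Fin.mk_one, Fin.isValue]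
      linear_combination -((w (z1, 0)) * R3 + (w (z1, 1)) * R4)
  · rw [if_neg hz, coord_of_mem hm1 hz, coord_of_mem hm2 hz]
    ring

lemma coord_zero_of_inner_ONB {x : ℤ} {ζ₁ ζ₂ : H} (h : ONBx x ζ₁ ζ₂) {q : H}
    (h1 : ⟪ζ₁, q⟫ = 0) (h2 : ⟪ζ₂, q⟫ = 0) (i : Fin 2) : q (x, i) = 0 := by
  have hP : P x q = 0 := by rw [P_eq_ONB h q, h1, h2]; simp
  have := P_coord x q (x, i)
  rw [hP, if_pos rfl] at this
  exact ((coe_zero (x, i)) ▸ this).symm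

lemma ketbra_apply (u v w : H) : ketbra u v w = ⟪v, w⟫ • u := rfl

lemma clm_apply (U : H ≃ₗᵢ[ℂ] H) (w : H) : clm U w = U w := rfl

lemma UP_eq (U : H ≃ₗᵢ[ℂ] H) {y : ℤ} {ζ₁ ζ₂ : H} (h : ONBx y ζ₁ ζ₂) :
    (clm U).comp (P y) = ketbra (U ζ₁) ζ₁ + ketbra (U ζ₂) ζ₂ := by
  apply ContinuousLinearMap.ext
  intro w
  show clm U (P y w) = ketbra (U ζ₁) ζ₁ w + ketbra (U ζ₂) ζ₂ w
  rw [clm_apply, P_eq_ONB h w, ketbra_apply, ketbra_apply, map_add,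
    LinearIsometryEquiv.map_smul, LinearIsometryEquiv.map_smul]

lemma no_dep {u s : H} (hnu : ‖u‖ = 1) (hns : ‖s‖ = 1) (hus : ⟪u, s⟫ = 0) :
    ∀ c d : ℂ, c • u + d • s = 0 → c = 0 ∧ d = 0 := by
  intro c d h
  have hsu : ⟪s, u⟫ = 0 := by
    rw [← inner_conj_symm, hus, map_zero]
  constructor
  · have h1 : ⟪u, c • u + d • s⟫ = 0 := by rw [h, inner_zero_right]
    rw [inner_add_right, inner_smul_right, inner_smul_right, hus, norm_one_iff.mp hnu] at h1
    simpa using h1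
  · have h1 : ⟪s, c • u + d • s⟫ = 0 := by rw [h, inner_zero_right]
    rw [inner_add_right, inner_smul_right, inner_smul_right, hsu, norm_one_iff.mp hns] at h1
    simpa using h1

lemma perp_two {x : ℤ} {u s z : H} (hu : u ∈ Hx x) (hs : s ∈ Hx x) (hz : z ∈ Hx x)
    (hind : ∀ c d : ℂ, c • u + d • s = 0 → c = 0 ∧ d = 0)
    (h1 : ⟪u, z⟫ = 0) (h2 : ⟪s, z⟫ = 0) : z = 0 := by
  by_contra hz0
  have hzu : ⟪z, u⟫ = 0 := by rw [← inner_conj_symm, h1, map_zero]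
  have hzs : ⟪z, s⟫ = 0 := by rw [← inner_conj_symm, h2, map_zero]
  obtain ⟨cu, hcu⟩ := Submodule.mem_span_singleton.mp (mem_span_perp hz hz0 hu hzu)
  obtain ⟨cs, hcs⟩ := Submodule.mem_span_singleton.mp (mem_span_perp hz hz0 hs hzs)
  have hrel : cs • u + (-cu) • s = 0 := by
    rw [← hcu, ← hcs, smul_smul, smul_smul]
    module
  have hcu0 : cu = 0 := neg_eq_zero.mp (hind cs (-cu) hrel).2
  have hu0 : u = 0 := by rw [← hcu, hcu0, zero_smul]
  exact one_ne_zero (hind 1 0 (by simp [hu0])).1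

def norml (w : H) : H := ((‖w‖⁻¹ : ℝ) : ℂ) • w

lemma norml_mem {x : ℤ} {w : H} (hw : w ∈ Hx x) : norml w ∈ Hx x :=
  Submodule.smul_mem _ _ hw

lemma norml_norm {w : H} (hw : w ≠ 0) : ‖norml w‖ = 1 := by
  rw [norml, norm_smul]
  simp only [Complex.norm_real, norm_inv, norm_norm, Real.norm_eq_abs]
  rw [abs_of_nonneg (by positivity)]
  exact inv_mul_cancel₀ (norm_ne_zero_iff.mpr hw)

lemma span_norml {w : H} (hw : w ≠ 0) :
    Submodule.span ℂ {norml w} = Submodule.span ℂ {w} := by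
  rw [norml]
  apply Submodule.span_singleton_smul_eq
  apply IsUnit.mk0
  simp [hw, norm_eq_zero]

lemma inner_norml_zero {u v : H} (h : ⟪u, v⟫ = 0) : ⟪norml u, norml v⟫ = 0 := by
  rw [norml, norml, inner_smul_left, inner_smul_right, h]
  ring

lemma perp_ne_zero {x : ℤ} {w : H} (hw : w ∈ Hx x) (h : w ≠ 0) : perp x w ≠ 0 := by
  intro hp
  apply coords_ne_zero hw h
  have h0 := congrArg (fun v : H => v (x, 0)) hp
  have h1 := congrArg (fun v : H => v (x, 1)) hp
  simp only [perp_coord0, perp_coord1, coe_zero] at h0 h1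
  constructor
  · simpa using h1
  · simpa using (neg_eq_zero.mp h0)
lemma combo_coord0 (x : ℤ) (a b : ℂ) : ((a • e x 0 + b • e x 1 : H)) (x, 0) = a := by
  rw [coe_add, coe_smul, coe_smul, e_apply, e_apply]; norm_num

lemma combo_coord1 (x : ℤ) (a b : ℂ) : ((a • e x 0 + b • e x 1 : H)) (x, 1) = b := by
  rw [coe_add, coe_smul, coe_smul, e_apply, e_apply]; norm_num

lemma combo_ne_zero {x : ℤ} {a b : ℂ} (h : a ≠ 0 ∨ b ≠ 0) :
    (a • e x 0 + b • e x 1 : H) ≠ 0 := by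
  intro h0
  have h1 := congrArg (fun v : H => v (x, 0)) h0
  have h2 := congrArg (fun v : H => v (x, 1)) h0
  simp only [combo_coord0, combo_coord1, coe_zero] at h1 h2
  rcases h with h | h
  · exact h h1
  · exact h h2

lemma combo_mem (x : ℤ) (a b : ℂ) : (a • e x 0 + b • e x 1 : H) ∈ Hx x :=
  Submodule.add_mem _ (Submodule.smul_mem _ _ (e_mem x 0)) (Submodule.smul_mem _ _ (e_mem x 1))

lemma decomp3_of_coords {a b c : ℤ} {w : H}
    (h : ∀ z : ℤ × Fin 2, z.1 ≠ a → z.1 ≠ b → z.1 ≠ c → w z = 0) :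
    w = P a w + P b w + P c w ∨ ¬(a ≠ b ∧ a ≠ c ∧ b ≠ c) := by
  by_cases hd : a ≠ b ∧ a ≠ c ∧ b ≠ c
  · left
    apply H_ext; intro z
    rw [coe_add, coe_add, P_coord, P_coord, P_coord]
    by_cases hza : z.1 = a
    · rw [if_pos hza, if_neg (by omega), if_neg (by omega)]; ring
    by_cases hzb : z.1 = b
    · rw [if_neg hza, if_pos hzb, if_neg (by omega)]; ring
    by_cases hzc : z.1 = c
    · rw [if_neg hza, if_neg hzb, if_pos hzc]; ring
    · rw [if_neg hza, if_neg hzb, if_neg hzc, h z hza hzb hzc]; ring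
  · right; exact hd

lemma decomp3 {a b c : ℤ} {w : H} (hab : a ≠ b) (hac : a ≠ c) (hbc : b ≠ c)
    (h : ∀ z : ℤ × Fin 2, z.1 ≠ a → z.1 ≠ b → z.1 ≠ c → w z = 0) :
    w = P a w + P b w + P c w :=
  (decomp3_of_coords h).resolve_right (by tauto)

lemma P_sup3_zero {a b c y : ℤ} {v : H} (h : v ∈ Hx a ⊔ Hx b ⊔ Hx c)
    (ha : y ≠ a) (hb : y ≠ b) (hc : y ≠ c) : P y v = 0 := by
  obtain ⟨pq, hpq, r, hr, rfl⟩ := Submodule.mem_sup.mp h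
  obtain ⟨p, hp, q, hq, rfl⟩ := Submodule.mem_sup.mp hpq
  rw [map_add, map_add, P_of_mem_ne hp ha.symm, P_of_mem_ne hq hb.symm, P_of_mem_ne hr hc.symm]
  simp

section Ulem

variable {U : H ≃ₗᵢ[ℂ] H}

lemma sup3_coord_zero {x : ℤ} {v : H} (h : v ∈ Hx (x - 1) ⊔ Hx x ⊔ Hx (x + 1))
    {z : ℤ × Fin 2} (hz1 : z.1 ≠ x - 1) (hz2 : z.1 ≠ x) (hz3 : z.1 ≠ x + 1) : v z = 0 :=
  coord_sup3 h hz1 hz2 hz3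

lemma U_decomp {x : ℤ} {w : H} (hU : SSQW U) (hw : w ∈ Hx x) :
    U w = P (x - 1) (U w) + P x (U w) + P (x + 1) (U w) :=
  decomp3 (by omega) (by omega) (by omega)
    (fun z h1 h2 h3 => coord_sup3 (hU.1 x w hw) h1 h2 h3)

lemma inner_U_far {x y : ℤ} {w ξ : H} (hU : SSQW U) (hw : w ∈ Hx x) (hξ : ξ ∈ Hx y)
    (h1 : y ≠ x - 1) (h2 : y ≠ x) (h3 : y ≠ x + 1) : ⟪U w, ξ⟫ = 0 := by
  rw [← inner_conj_symm, inner_of_left_mem hξ]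
  rw [coord_sup3 (hU.1 x w hw) (by simpa using h1) (by simpa using h2) (by simpa using h3),
    coord_sup3 (hU.1 x w hw) (by simpa using h1) (by simpa using h2) (by simpa using h3)]
  simp

lemma inner_U_right_cell {x : ℤ} {w ξ : H} (hU : SSQW U) (hw : w ∈ Hx x)
    (hξ : ξ ∈ Hx (x + 1)) : ⟪U w, ξ⟫ = ⟪P (x + 1) (U w), ξ⟫ := by
  conv_lhs => rw [U_decomp hU hw]
  rw [inner_add_left, inner_add_left,
    inner_cross (P_mem (x - 1) (U w)) hξ (by omega),
    inner_cross (P_mem x (U w)) hξ (by omega)]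
  ring

lemma star_id (hU : SSQW U) (x : ℤ) {ξ : H} (hξ : ξ ∈ Hx (x + 1)) :
    ⟪P (x + 1) (U (e x 0)), ξ⟫ • (P (x - 1) (U (e x 0))) +
    ⟪P (x + 1) (U (e x 1)), ξ⟫ • (P (x - 1) (U (e x 1))) = 0 := by
  set η := U.symm ξ with hη
  have hcoordη : ∀ z : ℤ × Fin 2, z.1 ≠ x → z.1 ≠ x + 1 → z.1 ≠ x + 2 → η z = 0 := by
    intro z h1 h2 h3
    rw [← inner_e, hη, ← LinearIsometryEquiv.inner_map_eq_flip]
    exact inner_U_far hU (e_mem z.1 z.2) hξ (by omega) (by omega) (by omega)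
  have hdec : η = P x η + P (x + 1) η + P (x + 2) η :=
    decomp3 (by omega) (by omega) (by omega) hcoordη
  have hUη : U η = ξ := U.apply_symm_apply ξ
  have hzero : P (x - 1) ξ = 0 := P_of_mem_ne hξ (by omega)
  have key : P (x - 1) (U (P x η)) = 0 := by
    have expand : U η = U (P x η) + U (P (x + 1) η) + U (P (x + 2) η) := by
      conv_lhs => rw [hdec]
      rw [map_add, map_add]
    have h2 : P (x - 1) (U (P (x + 1) η)) = 0 :=
      P_sup3_zero (by simpa using hU.1 (x + 1) _ (P_mem (x + 1) η))
        (by omega) (by omega) (by omega)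
    have h3 : P (x - 1) (U (P (x + 2) η)) = 0 :=
      P_sup3_zero (by simpa using hU.1 (x + 2) _ (P_mem (x + 2) η))
        (by omega) (by omega) (by omega)
    have := congrArg (fun v => P (x - 1) v) expand
    simp only [map_add] at this
    rw [hUη, hzero, h2, h3, add_zero, add_zero] at this
    exact this.symm
  have hco : ∀ i : Fin 2, η (x, i) = ⟪P (x + 1) (U (e x i)), ξ⟫ := by
    intro i
    rw [← inner_e, hη, ← LinearIsometryEquiv.inner_map_eq_flip]
    exact inner_U_right_cell hU (e_mem x i) hξ
  have hPx : P x η = η (x, 0) • e x 0 + η (x, 1) • e x 1 := P_apply x η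
  calc ⟪P (x + 1) (U (e x 0)), ξ⟫ • (P (x - 1) (U (e x 0))) +
      ⟪P (x + 1) (U (e x 1)), ξ⟫ • (P (x - 1) (U (e x 1)))
      = P (x - 1) (U (η (x, 0) • e x 0 + η (x, 1) • e x 1)) := by
        rw [map_add, LinearIsometryEquiv.map_smul, LinearIsometryEquiv.map_smul,
          map_add, map_smul, map_smul, hco 0, hco 1]
    _ = P (x - 1) (U (P x η)) := by rw [← hPx]
    _ = 0 := key

end Ulem
section Zeta

variable {U : H ≃ₗᵢ[ℂ] H}

lemma PU_combo (y x : ℤ) (a b : ℂ) :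
    P y (U (a • e x 0 + b • e x 1)) = a • P y (U (e x 0)) + b • P y (U (e x 1)) := by
  rw [map_add, LinearIsometryEquiv.map_smul, LinearIsometryEquiv.map_smul, map_add,
    map_smul, map_smul]

lemma PU_smul (y : ℤ) (c : ℂ) (w : H) : P y (U (c • w)) = c • P y (U w) := by
  rw [LinearIsometryEquiv.map_smul, map_smul]

lemma zeta_exists (hU : SSQW U) (x : ℤ) :
    ∃ ζ₁ ζ₂ : H, ONBx x ζ₁ ζ₂ ∧ P (x - 1) (U ζ₁) = 0 ∧ P (x + 1) (U ζ₂) = 0 := by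
  set g0 := P (x + 1) (U (e x 0)) with hg0
  set g1 := P (x + 1) (U (e x 1)) with hg1
  set f0 := P (x - 1) (U (e x 0)) with hf0
  set f1 := P (x - 1) (U (e x 1)) with hf1
  have hT : ∀ i : Fin 2, ((P (x + 1)).comp ((clm U).comp (P x))) (e x i)
      = P (x + 1) (U (e x i)) := by
    intro i
    show P (x + 1) (clm U (P x (e x i))) = _
    rw [P_of_mem (e_mem x i), clm_apply]
  have hT' : ∀ i : Fin 2, ((P (x - 1)).comp ((clm U).comp (P x))) (e x i)
      = P (x - 1) (U (e x i)) := by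
    intro i
    show P (x - 1) (clm U (P x (e x i))) = _
    rw [P_of_mem (e_mem x i), clm_apply]
  obtain ⟨β₀, β₁, hβ, hβrel⟩ := dep_of_rank_le_one (hU.2.1 x) (e x 0) (e x 1)
  obtain ⟨α₀, α₁, hα, hαrel⟩ := dep_of_rank_le_one (hU.2.2 x) (e x 0) (e x 1)
  rw [hT 0, hT 1, ← hg0, ← hg1] at hβrel
  rw [hT' 0, hT' 1, ← hf0, ← hf1] at hαrel
  by_cases hg : g0 = 0 ∧ g1 = 0
  · -- P_{x+1} U vanishes on the whole cell
    set w₁ : H := α₀ • e x 0 + α₁ • e x 1 with hw₁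
    have hw₁ne : w₁ ≠ 0 := combo_ne_zero hα
    have hw₁mem : w₁ ∈ Hx x := combo_mem x α₀ α₁
    refine ⟨norml w₁, norml (perp x w₁), ⟨norml_mem hw₁mem, norml_mem (perp_mem x w₁),
      norml_norm hw₁ne, norml_norm (perp_ne_zero hw₁mem hw₁ne),
      inner_norml_zero (inner_perp hw₁mem)⟩, ?_, ?_⟩
    · rw [norml, PU_smul, hw₁, PU_combo, ← hf0, ← hf1, hαrel, smul_zero]
    · rw [norml, PU_smul]
      have : P (x + 1) (U (perp x w₁)) =
          (-(starRingEnd ℂ (w₁ (x, 1)))) • g0 + (starRingEnd ℂ (w₁ (x, 0))) • g1 := by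
        rw [perp, PU_combo, ← hg0, ← hg1]
      rw [this, hg.1, hg.2, smul_zero, smul_zero, add_zero, smul_zero]
  · -- some g is nonzero
    set w₂ : H := β₀ • e x 0 + β₁ • e x 1 with hw₂
    have hw₂ne : w₂ ≠ 0 := combo_ne_zero hβ
    have hw₂mem : w₂ ∈ Hx x := combo_mem x β₀ β₁
    have hperp : perp x w₂ = (-(starRingEnd ℂ β₁)) • e x 0 + (starRingEnd ℂ β₀) • e x 1 := by
      rw [perp, hw₂, combo_coord0, combo_coord1]
    have hQ : (-(starRingEnd ℂ β₁)) • f0 + (starRingEnd ℂ β₀) • f1 = 0 := by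
      rcases not_and_or.mp hg with hgne | hgne
      · -- g0 ≠ 0
        have hS := star_id hU x (P_mem (x + 1) (U (e x 0)))
        rw [← hg0, ← hg1, ← hf0, ← hf1] at hS
        have hinner : ⟪β₀ • g0 + β₁ • g1, g0⟫ = 0 := by rw [hβrel, inner_zero_left]
        rw [inner_add_left, inner_smul_left, inner_smul_left] at hinner
        have hgg : ⟪g0, g0⟫ ≠ 0 := inner_self_ne_zero.mpr hgne
        set κ := (-(starRingEnd ℂ β₁)) / ⟪g0, g0⟫ with hκ
        have hκ1 : κ * ⟪g0, g0⟫ = -(starRingEnd ℂ β₁) := by rw [hκ, div_mul_cancel₀ _ hgg]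
        have hκ2 : κ * ⟪g1, g0⟫ = starRingEnd ℂ β₀ := by
          rw [hκ]
          field_simp
          linear_combination -hinner
        calc (-(starRingEnd ℂ β₁)) • f0 + (starRingEnd ℂ β₀) • f1
            = κ • (⟪g0, g0⟫ • f0 + ⟪g1, g0⟫ • f1) := by
              rw [smul_add, smul_smul, smul_smul, hκ1, hκ2]
          _ = 0 := by rw [hS, smul_zero]
      · -- g1 ≠ 0
        have hS := star_id hU x (P_mem (x + 1) (U (e x 1)))
        rw [← hg0, ← hg1, ← hf0, ← hf1] at hS
        have hinner : ⟪β₀ • g0 + β₁ • g1, g1⟫ = 0 := by rw [hβrel, inner_zero_left]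
        rw [inner_add_left, inner_smul_left, inner_smul_left] at hinner
        have hgg : ⟪g1, g1⟫ ≠ 0 := inner_self_ne_zero.mpr hgne
        set κ := (starRingEnd ℂ β₀) / ⟪g1, g1⟫ with hκ
        have hκ2 : κ * ⟪g1, g1⟫ = starRingEnd ℂ β₀ := by rw [hκ, div_mul_cancel₀ _ hgg]
        have hκ1 : κ * ⟪g0, g1⟫ = -(starRingEnd ℂ β₁) := by
          rw [hκ]
          field_simp
          linear_combination hinner
        calc (-(starRingEnd ℂ β₁)) • f0 + (starRingEnd ℂ β₀) • f1
            = κ • (⟪g0, g1⟫ • f0 + ⟪g1, g1⟫ • f1) := by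
              rw [smul_add, smul_smul, smul_smul, hκ1, hκ2]
          _ = 0 := by rw [hS, smul_zero]
    refine ⟨norml (perp x w₂), norml w₂, ⟨norml_mem (perp_mem x w₂), norml_mem hw₂mem,
      norml_norm (perp_ne_zero hw₂mem hw₂ne), norml_norm hw₂ne, ?_⟩, ?_, ?_⟩
    · apply inner_norml_zero
      rw [← inner_conj_symm, inner_perp hw₂mem, map_zero]
    · rw [norml, PU_smul, hperp, PU_combo, ← hf0, ← hf1, hQ, smul_zero]
    · rw [norml, PU_smul, hw₂, PU_combo, ← hg0, ← hg1, hβrel, smul_zero]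

end Zeta
lemma inner_decomp_mid {v w : H} {x : ℤ} (hv : v = P (x - 1) v + P x v)
    (hw : w = P x w + P (x + 1) w) (hvw : ⟪v, w⟫ = 0) : ⟪P x v, P x w⟫ = 0 := by
  have h2 : ⟪P (x - 1) v + P x v, P x w + P (x + 1) w⟫ = 0 := by
    rw [← hv, ← hw]; exact hvw
  rw [inner_add_left, inner_add_right, inner_add_right,
    inner_cross (P_mem (x - 1) v) (P_mem x w) (by omega),
    inner_cross (P_mem (x - 1) v) (P_mem (x + 1) w) (by omega),
    inner_cross (P_mem x v) (P_mem (x + 1) w) (by omega)] at h2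
  simpa using h2

lemma span_pair_of_dep {x : ℤ} {p q : H} (hp : p ∈ Hx x) (hq : q ∈ Hx x)
    (hdep : ∃ c d : ℂ, (c ≠ 0 ∨ d ≠ 0) ∧ c • p + d • q = 0) (hne : ¬(p = 0 ∧ q = 0)) :
    ∃ w : H, (w = p ∨ w = q) ∧ w ∈ Hx x ∧ w ≠ 0 ∧
      p ∈ Submodule.span ℂ {w} ∧ q ∈ Submodule.span ℂ {w} := by
  obtain ⟨c, d, hcd, hrel⟩ := hdep
  by_cases hp0 : p = 0
  · have hq0 : q ≠ 0 := fun h => hne ⟨hp0, h⟩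
    exact ⟨q, Or.inr rfl, hq, hq0, by rw [hp0]; exact Submodule.zero_mem _,
      Submodule.mem_span_singleton_self q⟩
  · refine ⟨p, Or.inl rfl, hp, hp0, Submodule.mem_span_singleton_self p, ?_⟩
    by_cases hd : d = 0
    · exfalso
      rw [hd, zero_smul, add_zero] at hrel
      have hc : c ≠ 0 := by tauto
      exact hp0 (by simpa [hc] using hrel)
    · rw [Submodule.mem_span_singleton]
      refine ⟨-c / d, ?_⟩
      apply smul_right_injective H hd
      show d • ((-c / d) • p) = d • q
      rw [smul_smul]
      have h3 : d * (-c / d) = -c := by field_simp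
      rw [h3]
      linear_combination (norm := module) -hrel

lemma ONBx_swap {x : ℤ} {a b : H} (h : ONBx x a b) : ONBx x b a :=
  ⟨h.2.1, h.1, h.2.2.2.1, h.2.2.1, by rw [← inner_conj_symm, h.2.2.2.2, map_zero]⟩

lemma not_dep_ind {u s : H} (h : ¬∃ c d : ℂ, (c ≠ 0 ∨ d ≠ 0) ∧ c • u + d • s = 0) :
    ∀ c d : ℂ, c • u + d • s = 0 → c = 0 ∧ d = 0 := by
  intro c d hrel
  by_contra hcd
  rw [not_and_or] at hcd
  exact h ⟨c, d, by tauto, hrel⟩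

lemma mem_span_norml {w v : H} (hw : w ≠ 0) (hv : v ∈ Submodule.span ℂ {w}) :
    v ∈ Submodule.span ℂ {norml w} := by
  rw [span_norml hw]; exact hv

/-- **Theorem 2.5.** Under the SSQW conditions and Assumption A,
there exist orthonormal bases `{η₁ˣ, η₂ˣ}` and `{ζ₁ˣ, ζ₂ˣ}` of each `H_x` and
an orthonormal basis `{ξ₁ˣ, ξ₂ˣ}_{x∈ℤ}` of `H` with
`ξ₁ˣ ∈ ℂη₁ˣ + ℂη₂^{x+1}`, `ξ₂ˣ ∈ ℂη₁^{x−1} + ℂη₂ˣ` and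
`U = Σ_x |ξ₁ˣ⟩⟨ζ₁ˣ| + |ξ₂ˣ⟩⟨ζ₂ˣ|` (i.e. `U ζᵢˣ = ξᵢˣ`). -/
theorem structure_theorem (U : H ≃ₗᵢ[ℂ] H) (hU : SSQW U) (hA : AssumptionA U) :
    ∃ η₁ η₂ ζ₁ ζ₂ ξ₁ ξ₂ : ℤ → H,
      (∀ x : ℤ, ONBx x (η₁ x) (η₂ x)) ∧
      (∀ x : ℤ, ONBx x (ζ₁ x) (ζ₂ x)) ∧
      Orthonormal ℂ (fun z : ℤ × Fin 2 => if z.2 = 0 then ξ₁ z.1 else ξ₂ z.1) ∧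
      (Submodule.span ℂ
        (Set.range (fun z : ℤ × Fin 2 => if z.2 = 0 then ξ₁ z.1 else ξ₂ z.1))).topologicalClosure
        = ⊤ ∧
      (∀ x : ℤ, ξ₁ x ∈ Submodule.span ℂ {η₁ x} ⊔ Submodule.span ℂ {η₂ (x + 1)}) ∧
      (∀ x : ℤ, ξ₂ x ∈ Submodule.span ℂ {η₁ (x - 1)} ⊔ Submodule.span ℂ {η₂ x}) ∧
      (∀ x : ℤ, U (ζ₁ x) = ξ₁ x ∧ U (ζ₂ x) = ξ₂ x) := by
  choose ζ₁ ζ₂ hONB hP1 hP2 using zeta_exists hU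
  have hmem1 : ∀ x, ζ₁ x ∈ Hx x := fun x => (hONB x).1
  have hmem2 : ∀ x, ζ₂ x ∈ Hx x := fun x => (hONB x).2.1
  have hnζ1 : ∀ x, ‖ζ₁ x‖ = 1 := fun x => (hONB x).2.2.1
  have hnζ2 : ∀ x, ‖ζ₂ x‖ = 1 := fun x => (hONB x).2.2.2.1
  have hiζ : ∀ x, ⟪ζ₁ x, ζ₂ x⟫ = 0 := fun x => (hONB x).2.2.2.2
  have hnξ1 : ∀ x, ‖U (ζ₁ x)‖ = 1 := fun x => by
    rw [LinearIsometryEquiv.norm_map]; exact hnζ1 x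
  have hnξ2 : ∀ x, ‖U (ζ₂ x)‖ = 1 := fun x => by
    rw [LinearIsometryEquiv.norm_map]; exact hnζ2 x
  have dec1 : ∀ y : ℤ, U (ζ₁ y) = P y (U (ζ₁ y)) + P (y + 1) (U (ζ₁ y)) := by
    intro y
    have h := U_decomp hU (hmem1 y)
    rw [hP1 y, zero_add] at h
    exact h
  have dec2 : ∀ y : ℤ, U (ζ₂ y) = P (y - 1) (U (ζ₂ y)) + P y (U (ζ₂ y)) := by
    intro y
    have h := U_decomp hU (hmem2 y)
    rw [hP2 y, add_zero] at h
    exact h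
  have dec1' : ∀ y : ℤ, U (ζ₁ (y - 1)) = P (y - 1) (U (ζ₁ (y - 1))) + P y (U (ζ₁ (y - 1))) := by
    intro y
    have h := dec1 (y - 1)
    rw [show y - 1 + 1 = y from by ring] at h
    exact h
  have dec2' : ∀ y : ℤ, U (ζ₂ (y + 1)) = P y (U (ζ₂ (y + 1))) + P (y + 1) (U (ζ₂ (y + 1))) := by
    intro y
    have h := dec2 (y + 1)
    rw [show y + 1 - 1 = y from by ring] at h
    exact h
  have horthru : ∀ y : ℤ, ⟪P y (U (ζ₁ (y - 1))), P y (U (ζ₁ y))⟫ = 0 := by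
    intro y
    refine inner_decomp_mid (dec1' y) (dec1 y) ?_
    rw [LinearIsometryEquiv.inner_map_map]
    exact inner_cross (hmem1 (y - 1)) (hmem1 y) (by omega)
  have horthrs : ∀ y : ℤ, ⟪P y (U (ζ₁ (y - 1))), P y (U (ζ₂ (y + 1)))⟫ = 0 := by
    intro y
    refine inner_decomp_mid (dec1' y) (dec2' y) ?_
    rw [LinearIsometryEquiv.inner_map_map]
    exact inner_cross (hmem1 (y - 1)) (hmem2 (y + 1)) (by omega)
  have horthtu : ∀ y : ℤ, ⟪P y (U (ζ₂ y)), P y (U (ζ₁ y))⟫ = 0 := by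
    intro y
    refine inner_decomp_mid (dec2 y) (dec1 y) ?_
    rw [LinearIsometryEquiv.inner_map_map, ← inner_conj_symm, hiζ y, map_zero]
  have horthts : ∀ y : ℤ, ⟪P y (U (ζ₂ y)), P y (U (ζ₂ (y + 1)))⟫ = 0 := by
    intro y
    refine inner_decomp_mid (dec2 y) (dec2' y) ?_
    rw [LinearIsometryEquiv.inner_map_map]
    exact inner_cross (hmem2 y) (hmem2 (y + 1)) (by omega)
  -- construction of the η basis in each cell
  have heta : ∀ x : ℤ, ∃ η₁ η₂ : H, ONBx x η₁ η₂ ∧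
      P x (U (ζ₁ x)) ∈ Submodule.span ℂ {η₁} ∧
      P x (U (ζ₂ (x + 1))) ∈ Submodule.span ℂ {η₁} ∧
      P x (U (ζ₁ (x - 1))) ∈ Submodule.span ℂ {η₂} ∧
      P x (U (ζ₂ x)) ∈ Submodule.span ℂ {η₂} := by
    intro x
    by_cases hcase1 : ∃ c d : ℂ, (c ≠ 0 ∨ d ≠ 0) ∧
        c • (P x (U (ζ₁ x))) + d • (P x (U (ζ₂ (x + 1)))) = 0
    · by_cases hcase2 : ∃ c d : ℂ, (c ≠ 0 ∨ d ≠ 0) ∧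
          c • (P x (U (ζ₁ (x - 1)))) + d • (P x (U (ζ₂ x))) = 0
      · -- both pairs dependent: construct η₁, η₂
        by_cases hz1 : (P x (U (ζ₁ x))) = 0 ∧ (P x (U (ζ₂ (x + 1)))) = 0
        · by_cases hz2 : (P x (U (ζ₁ (x - 1)))) = 0 ∧ (P x (U (ζ₂ x))) = 0
          · refine ⟨e x 0, e x 1, ⟨e_mem x 0, e_mem x 1, norm_e x 0, norm_e x 1, ?_⟩,
              ?_, ?_, ?_, ?_⟩
            · rw [inner_e_e]; simp
            · rw [hz1.1]; exact Submodule.zero_mem _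
            · rw [hz1.2]; exact Submodule.zero_mem _
            · rw [hz2.1]; exact Submodule.zero_mem _
            · rw [hz2.2]; exact Submodule.zero_mem _
          · obtain ⟨w, hwor, hwmem, hwne, hrw, htw⟩ :=
              span_pair_of_dep (P_mem x _) (P_mem x _) hcase2 hz2
            refine ⟨norml (perp x w), norml w,
              ⟨norml_mem (perp_mem x w), norml_mem hwmem,
               norml_norm (perp_ne_zero hwmem hwne), norml_norm hwne,
               inner_norml_zero (by rw [← inner_conj_symm, inner_perp hwmem, map_zero])⟩,
              ?_, ?_, mem_span_norml hwne hrw, mem_span_norml hwne htw⟩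
            · rw [hz1.1]; exact Submodule.zero_mem _
            · rw [hz1.2]; exact Submodule.zero_mem _
        · obtain ⟨w, hwor, hwmem, hwne, huw, hsw⟩ :=
            span_pair_of_dep (P_mem x _) (P_mem x _) hcase1 hz1
          have hwr : ⟪w, P x (U (ζ₁ (x - 1)))⟫ = 0 := by
            rcases hwor with rfl | rfl
            · rw [← inner_conj_symm, horthru x, map_zero]
            · rw [← inner_conj_symm, horthrs x, map_zero]
          have hwt : ⟪w, P x (U (ζ₂ x))⟫ = 0 := by
            rcases hwor with rfl | rfl
            · rw [← inner_conj_symm, horthtu x, map_zero]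
            · rw [← inner_conj_symm, horthts x, map_zero]
          exact ⟨norml w, norml (perp x w),
            ⟨norml_mem hwmem, norml_mem (perp_mem x w), norml_norm hwne,
             norml_norm (perp_ne_zero hwmem hwne), inner_norml_zero (inner_perp hwmem)⟩,
            mem_span_norml hwne huw, mem_span_norml hwne hsw,
            mem_span_norml (perp_ne_zero hwmem hwne)
              (mem_span_perp hwmem hwne (P_mem x _) hwr),
            mem_span_norml (perp_ne_zero hwmem hwne)
              (mem_span_perp hwmem hwne (P_mem x _) hwt)⟩
      · -- (r, t) independent: contradiction with Assumption A on the right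
        exfalso
        have hind := not_dep_ind hcase2
        have hu0 : P x (U (ζ₁ x)) = 0 :=
          perp_two (P_mem x _) (P_mem x _) (P_mem x _) hind (horthru x) (horthtu x)
        have hs0 : P x (U (ζ₂ (x + 1))) = 0 :=
          perp_two (P_mem x _) (P_mem x _) (P_mem x _) hind (horthrs x) (horthts x)
        have hrepr1 : U (ζ₁ x) = P (x + 1) (U (ζ₁ x)) := by
          have h := dec1 x; rw [hu0, zero_add] at h; exact h
        have hrepr2 : U (ζ₂ (x + 1)) = P (x + 1) (U (ζ₂ (x + 1))) := by
          have h := dec2' x; rw [hs0, zero_add] at h; exact h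
        have hm1' : U (ζ₁ x) ∈ Hx (x + 1) := by rw [hrepr1]; exact P_mem _ _
        have hm2' : U (ζ₂ (x + 1)) ∈ Hx (x + 1) := by rw [hrepr2]; exact P_mem _ _
        have hind' : ∀ c d : ℂ, c • U (ζ₁ x) + d • U (ζ₂ (x + 1)) = 0 → c = 0 ∧ d = 0 := by
          apply no_dep (hnξ1 x) (hnξ2 (x + 1))
          rw [LinearIsometryEquiv.inner_map_map]
          exact inner_cross (hmem1 x) (hmem2 (x + 1)) (by omega)
        have hu0' : P (x + 1) (U (ζ₁ (x + 1))) = 0 := by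
          apply perp_two hm1' hm2' (P_mem _ _) hind' ?_ ?_
          · rw [hrepr1]
            have hh := horthru (x + 1)
            rw [show x + 1 - 1 = x from by ring] at hh
            exact hh
          · rw [hrepr2]
            exact horthtu (x + 1)
        have hm3' : U (ζ₁ (x + 1)) ∈ Hx (x + 1 + 1) := by
          have h := dec1 (x + 1); rw [hu0', zero_add] at h; rw [h]; exact P_mem _ _
        apply hA
        refine ⟨x + 1, ζ₂ (x + 1), ζ₁ (x + 1), U (ζ₂ (x + 1)), U (ζ₁ (x + 1)),
          ONBx_swap (hONB (x + 1)), hnξ2 (x + 1), hnξ1 (x + 1),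
          Or.inr ⟨hm2', hm3'⟩, ?_⟩
        rw [UP_eq U (hONB (x + 1))]
        exact add_comm _ _
    · -- (u, s) independent: contradiction with Assumption A on the left
      exfalso
      have hind := not_dep_ind hcase1
      have hr0 : P x (U (ζ₁ (x - 1))) = 0 := by
        apply perp_two (P_mem x _) (P_mem x _) (P_mem x _) hind
        · rw [← inner_conj_symm, horthru x, map_zero]
        · rw [← inner_conj_symm, horthrs x, map_zero]
      have ht0 : P x (U (ζ₂ x)) = 0 := by
        apply perp_two (P_mem x _) (P_mem x _) (P_mem x _) hind
        · rw [← inner_conj_symm, horthtu x, map_zero]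
        · rw [← inner_conj_symm, horthts x, map_zero]
      have hrepr1 : U (ζ₁ (x - 1)) = P (x - 1) (U (ζ₁ (x - 1))) := by
        have h := dec1' x; rw [hr0, add_zero] at h; exact h
      have hrepr2 : U (ζ₂ x) = P (x - 1) (U (ζ₂ x)) := by
        have h := dec2 x; rw [ht0, add_zero] at h; exact h
      have hm1' : U (ζ₁ (x - 1)) ∈ Hx (x - 1) := by rw [hrepr1]; exact P_mem _ _
      have hm2' : U (ζ₂ x) ∈ Hx (x - 1) := by rw [hrepr2]; exact P_mem _ _
      have hind' : ∀ c d : ℂ, c • U (ζ₁ (x - 1)) + d • U (ζ₂ x) = 0 → c = 0 ∧ d = 0 := by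
        apply no_dep (hnξ1 (x - 1)) (hnξ2 x)
        rw [LinearIsometryEquiv.inner_map_map]
        exact inner_cross (hmem1 (x - 1)) (hmem2 x) (by omega)
      have ht0' : P (x - 1) (U (ζ₂ (x - 1))) = 0 := by
        apply perp_two hm1' hm2' (P_mem _ _) hind' ?_ ?_
        · rw [hrepr1, ← inner_conj_symm, horthtu (x - 1), map_zero]
        · rw [hrepr2, ← inner_conj_symm]
          have hh := horthts (x - 1)
          rw [show x - 1 + 1 = x from by ring] at hh
          rw [hh, map_zero]
      have hm3' : U (ζ₂ (x - 1)) ∈ Hx (x - 1 - 1) := by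
        have h := dec2 (x - 1); rw [ht0', add_zero] at h; rw [h]; exact P_mem _ _
      apply hA
      refine ⟨x - 1, ζ₂ (x - 1), ζ₁ (x - 1), U (ζ₂ (x - 1)), U (ζ₁ (x - 1)),
        ONBx_swap (hONB (x - 1)), hnξ2 (x - 1), hnξ1 (x - 1),
        Or.inl ⟨hm3', hm1'⟩, ?_⟩
      rw [UP_eq U (hONB (x - 1))]
      exact add_comm _ _
  choose η₁ η₂ hη hsp1 hsp2 hsp3 hsp4 using heta
  refine ⟨η₁, η₂, ζ₁, ζ₂, fun x => U (ζ₁ x), fun x => U (ζ₂ x), hη, hONB, ?_, ?_, ?_, ?_,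
    fun x => ⟨rfl, rfl⟩⟩
  · -- orthonormality
    rw [orthonormal_iff_ite]
    rintro ⟨a, i⟩ ⟨b, j⟩
    show ⟪(if i = 0 then U (ζ₁ a) else U (ζ₂ a)), (if j = 0 then U (ζ₁ b) else U (ζ₂ b))⟫
      = if ((a, i) : ℤ × Fin 2) = (b, j) then (1 : ℂ) else 0
    by_cases hi : i = 0
    · by_cases hj : j = 0
      · subst hi; subst hj
        rw [if_pos rfl, if_pos rfl, LinearIsometryEquiv.inner_map_map]
        by_cases hab : a = b
        · subst hab
          rw [if_pos rfl]
          exact norm_one_iff.mp (hnζ1 a)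
        · rw [if_neg (by simp [Prod.ext_iff, hab])]
          exact inner_cross (hmem1 a) (hmem1 b) hab
      · subst hi
        rw [if_pos rfl, if_neg hj, LinearIsometryEquiv.inner_map_map,
          if_neg (by simp [Prod.ext_iff]; intro _ h; exact hj h.symm)]
        by_cases hab : a = b
        · subst hab; exact hiζ a
        · exact inner_cross (hmem1 a) (hmem2 b) hab
    · by_cases hj : j = 0
      · subst hj
        rw [if_neg hi, if_pos rfl, LinearIsometryEquiv.inner_map_map,
          if_neg (by simp [Prod.ext_iff]; intro _ h; exact hi h)]
        by_cases hab : a = b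
        · subst hab
          rw [← inner_conj_symm, hiζ a, map_zero]
        · exact inner_cross (hmem2 a) (hmem1 b) hab
      · have hi1 : i = 1 := by omega
        have hj1 : j = 1 := by omega
        subst hi1; subst hj1
        rw [if_neg (by norm_num), if_neg (by norm_num), LinearIsometryEquiv.inner_map_map]
        by_cases hab : a = b
        · subst hab
          rw [if_pos rfl]
          exact norm_one_iff.mp (hnζ2 a)
        · rw [if_neg (by simp [Prod.ext_iff, hab])]
          exact inner_cross (hmem2 a) (hmem2 b) hab
  · -- density
    rw [Submodule.topologicalClosure_eq_top_iff, Submodule.eq_bot_iff]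
    intro v hv
    rw [Submodule.mem_orthogonal] at hv
    have hcoord : ∀ z : ℤ × Fin 2, (U.symm v : H) z = 0 := by
      rintro ⟨a, i⟩
      apply coord_zero_of_inner_ONB (hONB a)
      · have h1 : ⟪U (ζ₁ a), v⟫ = 0 := by
          apply hv
          apply Submodule.subset_span
          exact ⟨(a, 0), by simp⟩
        rw [LinearIsometryEquiv.inner_map_eq_flip] at h1
        exact h1
      · have h1 : ⟪U (ζ₂ a), v⟫ = 0 := by
          apply hv
          apply Submodule.subset_span
          refine ⟨(a, 1), by norm_num⟩
        rw [LinearIsometryEquiv.inner_map_eq_flip] at h1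
        exact h1
    have h0 : U.symm v = 0 := H_ext0 hcoord
    calc v = U (U.symm v) := (U.apply_symm_apply v).symm
      _ = 0 := by rw [h0, map_zero]
  · -- ξ₁ membership
    intro x
    have hdec := dec1 x
    show U (ζ₁ x) ∈ _
    rw [hdec]
    apply Submodule.add_mem_sup (hsp1 x)
    have h := hsp3 (x + 1)
    rw [show x + 1 - 1 = x from by ring] at h
    exact h
  · -- ξ₂ membership
    intro x
    have hdec := dec2 x
    show U (ζ₂ x) ∈ _
    rw [hdec]
    apply Submodule.add_mem_sup ?_ (hsp4 x)
    have h := hsp2 (x - 1)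
    rw [show x - 1 + 1 = x from by ring] at h
    exact h
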